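/- arXiv:0810.0862 — 4 statements merged into one kernel-verified Lean document; each statement's English description precedes it below -/
import Mathlib

section
/- The operator δ on C⁺(G) defined by δ(φ)(K,S) = ∑_{w∈S} [ U^{q(K,S)−q(K,S−w)}·φ(K,S−w) + U^{q(K,S)−q(K+2E_w,S−w)}·φ(K+2E_w,S−w) ] satisfies δ² = 0, so (C⁺(G),δ) is a chain complex of 𝔽[U]-modules. -/
/-!
Common setup: the lattice cohomology complex of a weighted graph
(Némethi; J. Greene, "A surgery triangle for lattice cohomology").

A finite graph `G` with integer weights on vertices and signs on (multi-)edges is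
encoded by its symmetric incidence data `M : V → V → ℤ`: for `u ≠ w` the entry
`M u w` is the signed number of edges joining `u` and `w`, and `M u u = m(u)` is
the weight of `u`.  This is exactly the data of the intersection pairing `(·,·)`
on `L(G) = ℤ⟨E_u : u ∈ V⟩`, via `M u w = (E_u, E_w)`.
-/

noncomputable section

open Function

/-- A graph with integer vertex weights and signed multi-edges, encoded by the
symmetric pairing data `M u w = (E_u, E_w)` on `L(G)`. -/
structure WGraph (V : Type*) where
  M : V → V → ℤ
  symm : ∀ u w, M u w = M w u

variable {V : Type*} [Fintype V] [DecidableEq V]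

/-- Evaluation of `K ∈ Hom(L(G), ℤ)` (recorded by its components `K u = K(E_u)`)
on a lattice vector `x = ∑ x_u E_u ∈ L(G)`. -/
def evalK (K x : V → ℤ) : ℤ := ∑ u, K u * x u

/-- `E_T = ∑_{j ∈ T} E_j ∈ L(G)`. -/
def eVec (T : Finset V) : V → ℤ := fun u => if u ∈ T then 1 else 0

/-- Splitting a sum over `V` at a vertex `v`. -/
theorem sum_split (v : V) (f : V → ℤ) :
    ∑ u, f u = f v + ∑ u : {u : V // u ≠ v}, f u.1 := by
  rw [Fintype.sum_eq_add_sum_compl v f]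
  congr 1
  exact Finset.sum_subtype _ (fun x => by simp) f

namespace WGraph

/-- The symmetric bilinear pairing `(x, y)` on `L(G)`. -/
def pair (G : WGraph V) (x y : V → ℤ) : ℤ := ∑ u, ∑ w, G.M u w * x u * y w

/-- `K ∈ Hom(L(G),ℤ)` is characteristic: `(K,x) ≡ (x,x) (mod 2)` for all `x ∈ L(G)`. -/
def IsChar (G : WGraph V) (K : V → ℤ) : Prop :=
  ∀ x : V → ℤ, evalK K x ≡ G.pair x x [ZMOD 2]

/-- The set `Char(G)` of characteristic vectors, as a type. -/
def Ch (G : WGraph V) : Type _ := {K : V → ℤ // G.IsChar K}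

/-- `K + 2x ∈ Hom(L(G),ℤ)`, for `K ∈ Hom(L(G),ℤ)` and `x ∈ L(G)` (a lattice vector
is viewed in `Hom(L(G),ℤ)` via the pairing). -/
def chAdd (G : WGraph V) (K x : V → ℤ) : V → ℤ := fun u => K u + 2 * G.pair x (eVec {u})

/-- The difference `q(K + 2x) − q(K) = −((K,x) + (x,x))/2`, where `q(y) = −(y,y)/8`;
it is an integer whenever `K` is characteristic. -/
def qdiff (G : WGraph V) (K x : V → ℤ) : ℤ := (-(evalK K x + G.pair x x)) / 2

/-- The difference `q(K,S) − q(K) = max { q(K + 2E_T) − q(K) : T ⊆ S }`, where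
`q(K,S) = max { q(K + 2 ∑_{j∈T} E_j) : T ⊆ S }`. -/
def qrel (G : WGraph V) (K : V → ℤ) (S : Finset V) : ℤ :=
  S.powerset.sup' (Finset.powerset_nonempty S) fun T => G.qdiff K (eVec T)

/-- `G₊₁(v)`: increase the weight `m(v)` of the vertex `v` by one. -/
def bump (G : WGraph V) (v : V) : WGraph V where
  M u w := if u = v ∧ w = v then G.M u w + 1 else G.M u w
  symm u w := by
    have h := G.symm u w
    by_cases hu : u = v <;> by_cases hw : w = v <;> simp [hu, hw, h] <;>
      exact G.symm _ _

/-- `G − v`: delete the vertex `v` and all incident edges. -/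
def delete (G : WGraph V) (v : V) : WGraph {u : V // u ≠ v} where
  M u w := G.M u.1 w.1
  symm u w := G.symm u.1 w.1

theorem evalK_update (L y : V → ℤ) (v : V) (c : ℤ) :
    evalK (Function.update L v (L v + c)) y = evalK L y + c * y v := by
  unfold evalK
  have h : ∀ u, Function.update L v (L v + c) u * y u
      = L u * y u + (if u = v then c * y u else 0) := by
    intro u
    rcases eq_or_ne u v with hu | hu <;> simp [hu, Function.update] <;> ring
  simp only [h]
  rw [Finset.sum_add_distrib, Finset.sum_ite_eq' Finset.univ v (fun u => c * y u)]
  simp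

theorem IsChar.chAdd {G : WGraph V} {K : V → ℤ} (h : G.IsChar K) (x : V → ℤ) :
    G.IsChar (G.chAdd K x) := by
  intro y
  have key : evalK (G.chAdd K x) y
      = evalK K y + 2 * ∑ u, G.pair x (eVec {u}) * y u := by
    simp only [evalK, WGraph.chAdd, add_mul, mul_assoc]
    rw [Finset.sum_add_distrib, ← Finset.mul_sum]
  have hy := h y
  simp only [Int.ModEq] at hy ⊢
  rw [key]
  omega

theorem pair_bump (G : WGraph V) (v : V) (y : V → ℤ) :
    (G.bump v).pair y y = G.pair y y + y v * y v := by
  unfold pair bump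
  have hu : ∀ u w : V, ((if u = v ∧ w = v then G.M u w + 1 else G.M u w) * y u * y w)
      = G.M u w * y u * y w + (if u = v ∧ w = v then y u * y w else 0) := by
    intro u w
    rcases eq_or_ne u v with h | h <;> rcases eq_or_ne w v with h' | h' <;>
      simp [h, h'] <;> ring
  simp only [hu, Finset.sum_add_distrib]
  congr 1
  have hin : ∀ u : V, (∑ w, if u = v ∧ w = v then y u * y w else 0)
      = if u = v then y u * y v else 0 := by
    intro u
    rcases eq_or_ne u v with h | h
    · simp [h, Finset.sum_ite_eq' Finset.univ v (fun w => y v * y w)]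
    · simp [h]
  rw [Finset.sum_congr rfl (fun u _ => hin u),
    Finset.sum_ite_eq' Finset.univ v (fun u => y u * y v)]
  simp

theorem IsChar.bumpUpdate {G : WGraph V} {L : V → ℤ} (h : G.IsChar L) (v : V) (i : ℤ) :
    (G.bump v).IsChar (Function.update L v (L v + (2 * i + 1))) := by
  intro y
  have h1 := evalK_update L y v (2 * i + 1)
  have h2 := pair_bump G v y
  have hy := h y
  obtain ⟨k, hk⟩ := Int.even_mul_succ_self (y v - 1)
  have hk' : y v * y v - y v = 2 * k := by
    have h5 : (y v - 1) * (y v - 1 + 1) = y v * y v - y v := by ring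
    omega
  have h3 : (2 * i + 1) * y v = 2 * (i * y v) + y v := by ring
  simp only [Int.ModEq] at hy ⊢
  rw [h1, h2, h3]
  omega

theorem IsChar.evenUpdate {G : WGraph V} {L : V → ℤ} (h : G.IsChar L) (v : V) (k : ℤ) :
    G.IsChar (Function.update L v (L v + 2 * k)) := by
  intro y
  have h1 := evalK_update L y v (2 * k)
  have hy := h y
  have h3 : 2 * k * y v = 2 * (k * y v) := by ring
  simp only [Int.ModEq] at hy ⊢
  rw [h1, h3]
  omega

end WGraph

/-- Extension of `K ∈ Hom(L(G−v),ℤ)` to `Hom(L(G),ℤ)` by the value `t` at `v`: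
the vector denoted `(K, t)`. -/
def extV (v : V) (K : {u : V // u ≠ v} → ℤ) (t : ℤ) : V → ℤ :=
  fun u => if h : u = v then t else K ⟨u, h⟩

namespace WGraph

theorem IsChar.extChar {G : WGraph V} {v : V} {K : {u : V // u ≠ v} → ℤ}
    (h : (G.delete v).IsChar K) {t : ℤ} (ht : t ≡ G.M v v [ZMOD 2]) :
    G.IsChar (extV v K t) := by
  intro y
  have h1 : evalK (extV v K t) y = t * y v + evalK K (fun u => y u.1) := by
    unfold evalK
    rw [sum_split v (fun u => extV v K t u * y u)]
    congr 1
    · simp [extV]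
    · exact Finset.sum_congr rfl fun u _ => by simp [extV, u.2]
  have h2 : G.pair y y = (G.delete v).pair (fun u => y u.1) (fun u => y u.1)
      + G.M v v * (y v * y v)
      + 2 * ∑ u : {u : V // u ≠ v}, G.M v u.1 * y v * y u.1 := by
    have step1 : G.pair y y = (∑ w, G.M v w * y v * y w)
        + ∑ u : {u : V // u ≠ v}, ∑ w, G.M u.1 w * y u.1 * y w :=
      sum_split v (fun u => ∑ w, G.M u w * y u * y w)
    have step2 : (∑ w, G.M v w * y v * y w)
        = G.M v v * y v * y v + ∑ w : {w : V // w ≠ v}, G.M v w.1 * y v * y w.1 :=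
      sum_split v _
    have step3 : ∀ u : {u : V // u ≠ v}, (∑ w, G.M u.1 w * y u.1 * y w)
        = G.M u.1 v * y u.1 * y v + ∑ w : {w : V // w ≠ v}, G.M u.1 w.1 * y u.1 * y w.1 :=
      fun u => sum_split v _
    have step4 : (G.delete v).pair (fun u => y u.1) (fun u => y u.1)
        = ∑ u : {u : V // u ≠ v}, ∑ w : {w : V // w ≠ v}, G.M u.1 w.1 * y u.1 * y w.1 := rfl
    have hc : (∑ u : {u : V // u ≠ v}, G.M u.1 v * y u.1 * y v)
        = ∑ u : {u : V // u ≠ v}, G.M v u.1 * y v * y u.1 := by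
      refine Finset.sum_congr rfl fun u _ => ?_
      rw [G.symm u.1 v]; ring
    rw [step1, step2, Finset.sum_congr rfl (fun u _ => step3 u),
      Finset.sum_add_distrib, hc, step4]
    ring
  have hy := h (fun u => y u.1)
  obtain ⟨k, hk⟩ := Int.even_mul_succ_self (y v - 1)
  have hk' : y v * y v - y v = 2 * k := by
    have h5 : (y v - 1) * (y v - 1 + 1) = y v * y v - y v := by ring
    omega
  obtain ⟨a, ha⟩ : (2:ℤ) ∣ t - G.M v v := Int.ModEq.dvd ht.symm
  have e1 : t * y v = G.M v v * y v + 2 * (a * y v) := by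
    have h6 : t = G.M v v + 2 * a := by omega
    rw [h6]; ring
  have e2 : G.M v v * (y v * y v) = G.M v v * y v + 2 * (G.M v v * k) := by
    have h7 : y v * y v = y v + 2 * k := by omega
    rw [h7]; ring
  simp only [Int.ModEq] at hy ⊢
  rw [h1, h2, e1, e2]
  omega

variable {G : WGraph V}

/-- `K + 2x` as a characteristic vector. -/
def Ch.add (K : G.Ch) (x : V → ℤ) : G.Ch := ⟨G.chAdd K.1 x, K.2.chAdd x⟩

/-- For `K = (K', t) ∈ Char(G)`, the characteristic vector
`(K', t + 2i + 1) ∈ Char(G₊₁(v))`. -/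
def Ch.bumpSh (K : G.Ch) (v : V) (i : ℤ) : (G.bump v).Ch :=
  ⟨Function.update K.1 v (K.1 v + (2 * i + 1)), K.2.bumpUpdate v i⟩

/-- For `K = (K', t) ∈ Char(G)`, the characteristic vector `(K', t + 2k) ∈ Char(G)`. -/
def Ch.evenSh (K : G.Ch) (v : V) (k : ℤ) : G.Ch :=
  ⟨Function.update K.1 v (K.1 v + 2 * k), K.2.evenUpdate v k⟩

/-- For `K ∈ Char(G−v)`, the characteristic vector `(K, m(v) + 2i) ∈ Char(G)`. -/
def Ch.extend {v : V} (K : (G.delete v).Ch) (i : ℤ) : G.Ch :=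
  ⟨extV v K.1 (G.M v v + 2 * i),
    K.2.extChar (by show (G.M v v + 2 * i) % 2 = G.M v v % 2; omega)⟩

end WGraph

/-- `𝒯⁺₀ = 𝔽[U,U⁻¹]/(U·𝔽[U])` over `𝔽 = ℤ/2ℤ`: the coefficient at `d ∈ ℕ` records
the coefficient of `U^{−d}`. -/
def Tplus : Type := ℕ →₀ ZMod 2

instance : AddCommGroup Tplus := inferInstanceAs (AddCommGroup (ℕ →₀ ZMod 2))
instance : Module (ZMod 2) Tplus := inferInstanceAs (Module (ZMod 2) (ℕ →₀ ZMod 2))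

/-- The element `U^{-m}` of `𝒯⁺₀`. -/
def Um (m : ℕ) : Tplus := (Finsupp.single m 1 : ℕ →₀ ZMod 2)

/-- Multiplication by `U^e` on `𝒯⁺₀`: `U^e · U^{−d} = U^{−(d−e)}` (which is `0` if `d < e`). -/
def Upow (e : ℤ) (f : Tplus) : Tplus :=
  (Finsupp.comapDomain (fun d : ℕ => (d : ℤ) + e)
    (Finsupp.embDomain ⟨(Nat.cast : ℕ → ℤ), Nat.cast_injective⟩ (f : ℕ →₀ ZMod 2))
    (fun a _ b _ hab => Nat.cast_injective (add_right_cancel hab)) : ℕ →₀ ZMod 2)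

theorem Upow_zero (e : ℤ) : Upow e 0 = 0 := by
  show (Finsupp.comapDomain _ (Finsupp.embDomain _ (0 : ℕ →₀ ZMod 2)) _ : ℕ →₀ ZMod 2)
    = (0 : ℕ →₀ ZMod 2)
  ext d
  simp

/-- `C⁺(G)`: the `𝔽[U]`-module of finitely supported maps `Char(G) × 𝒫(V) → 𝒯⁺₀`. -/
abbrev Cplus (G : WGraph V) : Type _ := (G.Ch × Finset V) →₀ Tplus

/-- The action of (multiplication by) `U` on `C⁺(G)`. -/
def UC (G : WGraph V) (φ : Cplus G) : Cplus G := Finsupp.mapRange (Upow 1) (Upow_zero 1) φ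

/-- `U^{−m} · (K,S)^∨`: the element of `C⁺(G)` supported at the single pair `(K,S)`
with value `U^{−m}`. -/
def dual {G : WGraph V} (p : G.Ch × Finset V) (m : ℕ) : Cplus G :=
  Finsupp.single p (Um m)

/-- The exponent `q(K,S) − q(K, S−w)`. -/
def dExp₁ (G : WGraph V) (K : V → ℤ) (S : Finset V) (w : V) : ℤ :=
  G.qrel K S - G.qrel K (S.erase w)

/-- The exponent `q(K,S) − q(K + 2E_w, S−w)`. -/
def dExp₂ (G : WGraph V) (K : V → ℤ) (S : Finset V) (w : V) : ℤ :=
  G.qrel K S - (G.qdiff K (eVec {w}) + G.qrel (G.chAdd K (eVec {w})) (S.erase w))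

/-- `δ` is the operator on `C⁺(G)` given by
`δ(φ)(K,S) = ∑_{w∈S} [U^{q(K,S)−q(K,S−w)}·φ(K,S−w) + U^{q(K,S)−q(K+2E_w,S−w)}·φ(K+2E_w,S−w)]`. -/
def IsDelta (G : WGraph V) (δ : Cplus G → Cplus G) : Prop :=
  ∀ (φ : Cplus G) (K : G.Ch) (S : Finset V),
    δ φ (K, S) = ∑ w ∈ S,
      (Upow (dExp₁ G K.1 S w) (φ (K, S.erase w))
        + Upow (dExp₂ G K.1 S w) (φ (K.add (eVec {w}), S.erase w)))

/-- The exponent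
`c(i,(K,t),S) = [q((K,t),S) − q(K,t)] − [q'((K,t+2i+1),S) − q'(K,t+2i+1)] + i(i+1)/2`. -/
def cExp (G : WGraph V) (v : V) (i : ℤ) (K : G.Ch) (S : Finset V) : ℤ :=
  G.qrel K.1 S - (G.bump v).qrel (K.bumpSh v i).1 S + i * (i + 1) / 2

/-- `A` is the map `C⁺(G₊₁(v)) → C⁺(G)` given by
`A(φ)((K,t),S) = ∑_{i∈ℤ} U^{c(i,(K,t),S)} · φ((K,t+2i+1),S)`. -/
def IsA (G : WGraph V) (v : V) (A : Cplus (G.bump v) → Cplus G) : Prop :=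
  ∀ (φ : Cplus (G.bump v)) (K : G.Ch) (S : Finset V),
    A φ (K, S) = ∑ᶠ i : ℤ, Upow (cExp G v i K S) (φ (K.bumpSh v i, S))

/-- A subset `S ⊆ V − v` viewed as a subset of `V`. -/
def liftS (v : V) (S : Finset {u : V // u ≠ v}) : Finset V :=
  S.map ⟨Subtype.val, Subtype.val_injective⟩

/-- `B` is the map `C⁺(G) → C⁺(G−v)` given by
`B(φ)(K,S) = ∑_{i∈ℤ} φ((K, m(v)+2i), S)`. -/
def IsB (G : WGraph V) (v : V) (B : Cplus G → Cplus (G.delete v)) : Prop :=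
  ∀ (φ : Cplus G) (K : (G.delete v).Ch) (S : Finset {u : V // u ≠ v}),
    B φ (K, S) = ∑ᶠ i : ℤ, φ (K.extend i, liftS v S)

/-- `r((K,t),S) = q((K,t),S−v) − q((K,t)+2E_v,S−v)` (for `v ∈ S`). -/
def rVal (G : WGraph V) (v : V) (K : G.Ch) (S : Finset V) : ℤ :=
  G.qrel K.1 (S.erase v)
    - (G.qdiff K.1 (eVec {v}) + G.qrel (G.chAdd K.1 (eVec {v})) (S.erase v))

/-- The lattice cohomology `ℍ⁺`: the homology of the complex `(C⁺, δ)`. -/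
abbrev Hlat {G : WGraph V} (δ : Cplus G →ₗ[ZMod 2] Cplus G) : Type _ :=
  LinearMap.ker δ ⧸ (LinearMap.range δ).comap (LinearMap.ker δ).subtype

/-- `𝒟₁ ⊆ C⁺(G)`: the `𝔽`-submodule generated by the `U^{−m}·((K,t),S)^∨` with `v ∈ S`. -/
def D1 (G : WGraph V) (v : V) : Submodule (ZMod 2) (Cplus G) :=
  Submodule.span (ZMod 2)
    {χ | ∃ (K : G.Ch) (S : Finset V) (m : ℕ), v ∈ S ∧ χ = dual (K, S) m}

/-- `𝒟₂ ⊆ C⁺(G)`: the `𝔽`-submodule generated by the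
`U^{−m}·[((K,t),S)^∨ + ((K,t+2),S)^∨]` with `v ∉ S`. -/
def D2 (G : WGraph V) (v : V) : Submodule (ZMod 2) (Cplus G) :=
  Submodule.span (ZMod 2)
    {χ | ∃ (K : G.Ch) (S : Finset V) (m : ℕ), v ∉ S ∧
      χ = dual (K, S) m + dual (K.evenSh v 1, S) m}


/-! ### Auxiliary material for `delta_squared_eq_zero` -/

section DeltaSqAux

/-- View an element of `𝒯⁺₀` as a finitely supported function. -/
def tp (f : Tplus) : ℕ →₀ ZMod 2 := f

theorem tp_add (f g : Tplus) : tp (f + g) = tp f + tp g := rfl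

theorem tp_zero : tp 0 = 0 := rfl

theorem embNat_apply (f : ℕ →₀ ZMod 2) (z : ℤ) :
    (Finsupp.embDomain ⟨(Nat.cast : ℕ → ℤ), Nat.cast_injective⟩ f) z
      = if 0 ≤ z then f z.toNat else 0 := by
  split
  · next h =>
      conv_lhs => rw [show z = ((z.toNat : ℕ) : ℤ) from (Int.toNat_of_nonneg h).symm]
      exact Finsupp.embDomain_apply_self _ f z.toNat
  · next h =>
      refine Finsupp.embDomain_notin_range _ _ _ ?_
      intro hmem
      obtain ⟨n, hn⟩ := hmem
      simp only [Function.Embedding.coeFn_mk] at hn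
      omega

theorem Upow_apply (e : ℤ) (f : Tplus) (d : ℕ) :
    tp (Upow e f) d = if 0 ≤ (d : ℤ) + e then tp f ((d : ℤ) + e).toNat else 0 := by
  show (Finsupp.comapDomain (fun d : ℕ => (d : ℤ) + e)
    (Finsupp.embDomain ⟨(Nat.cast : ℕ → ℤ), Nat.cast_injective⟩ (tp f)) _) d = _
  exact embNat_apply (tp f) ((d : ℤ) + e)

theorem Upow_comp (a b : ℤ) (ha : 0 ≤ a) (f : Tplus) :
    Upow a (Upow b f) = Upow (a + b) f := by
  have key : tp (Upow a (Upow b f)) = tp (Upow (a + b) f) := by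
    ext d
    simp only [Upow_apply]
    have h1 : 0 ≤ (d : ℤ) + a := by omega
    rw [if_pos h1]
    have h2 : ((((d : ℤ) + a).toNat : ℕ) : ℤ) + b = (d : ℤ) + (a + b) := by omega
    rw [h2]
  exact key

theorem Upow_add' (e : ℤ) (f g : Tplus) : Upow e (f + g) = Upow e f + Upow e g := by
  have key : tp (Upow e (f + g)) = tp (Upow e f + Upow e g) := by
    rw [tp_add]
    ext d
    rw [Finsupp.add_apply, Upow_apply, Upow_apply, Upow_apply, tp_add, Finsupp.add_apply]
    by_cases hc : 0 ≤ (d : ℤ) + e <;> simp [hc]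
  exact key

/-- `Upow e` as an additive monoid homomorphism. -/
def UpowHom (e : ℤ) : Tplus →+ Tplus where
  toFun := Upow e
  map_zero' := Upow_zero e
  map_add' := Upow_add' e

theorem Upow_sum {ι : Type*} (e : ℤ) (s : Finset ι) (f : ι → Tplus) :
    Upow e (∑ i ∈ s, f i) = ∑ i ∈ s, Upow e (f i) :=
  map_sum (UpowHom e) f s

theorem tplus_add_self (a : Tplus) : a + a = 0 := by
  have h : ∀ x : ZMod 2, x + x = 0 := by decide
  have key : tp (a + a) = tp 0 := by
    rw [tp_add, tp_zero]
    ext d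
    rw [Finsupp.add_apply, h]
    rfl
  exact key

variable {V : Type*} [Fintype V] [DecidableEq V]

theorem pair_symm' (G : WGraph V) (x y : V → ℤ) : G.pair x y = G.pair y x := by
  unfold WGraph.pair
  rw [Finset.sum_comm]
  refine Finset.sum_congr rfl fun b _ => Finset.sum_congr rfl fun a _ => ?_
  rw [G.symm a b]; ring

theorem pair_add_left' (G : WGraph V) (x y z : V → ℤ) :
    G.pair (fun u => x u + y u) z = G.pair x z + G.pair y z := by
  unfold WGraph.pair
  rw [← Finset.sum_add_distrib]
  refine Finset.sum_congr rfl fun u _ => ?_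
  rw [← Finset.sum_add_distrib]
  exact Finset.sum_congr rfl fun w _ => by ring

theorem pair_single' (G : WGraph V) (x : V → ℤ) (u : V) :
    G.pair x (eVec {u}) = ∑ a, G.M a u * x a := by
  unfold WGraph.pair
  refine Finset.sum_congr rfl fun a _ => ?_
  calc ∑ w, G.M a w * x a * eVec {u} w
      = ∑ w, if w = u then G.M a w * x a else 0 :=
        Finset.sum_congr rfl fun w _ => by
          unfold eVec; by_cases hw : w = u <;> simp [hw]
    _ = G.M a u * x a := by
        rw [Finset.sum_ite_eq' Finset.univ u (fun w => G.M a w * x a)]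
        simp

theorem sum_pair_single' (G : WGraph V) (x y : V → ℤ) :
    ∑ u, G.pair x (eVec {u}) * y u = G.pair x y := by
  have h1 : ∀ u, G.pair x (eVec {u}) * y u = ∑ a, G.M a u * x a * y u := by
    intro u; rw [pair_single', Finset.sum_mul]
  rw [Finset.sum_congr rfl fun u _ => h1 u, Finset.sum_comm]
  rfl

theorem evalK_chAdd' (G : WGraph V) (K x y : V → ℤ) :
    evalK (G.chAdd K x) y = evalK K y + 2 * G.pair x y := by
  unfold evalK WGraph.chAdd
  rw [← sum_pair_single' G x y, Finset.mul_sum, ← Finset.sum_add_distrib]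
  exact Finset.sum_congr rfl fun u _ => by ring

theorem evalK_add' (K x y : V → ℤ) :
    evalK K (fun u => x u + y u) = evalK K x + evalK K y := by
  unfold evalK
  rw [← Finset.sum_add_distrib]
  exact Finset.sum_congr rfl fun u _ => by ring

theorem qdiff_add' {G : WGraph V} {K : V → ℤ} (hK : G.IsChar K) (x y : V → ℤ) :
    G.qdiff K x + G.qdiff (G.chAdd K x) y = G.qdiff K (fun u => x u + y u) := by
  have hx := hK x
  have hy := (hK.chAdd x) y
  have hpair : G.pair (fun u => x u + y u) (fun u => x u + y u)
      = G.pair x x + 2 * G.pair x y + G.pair y y := by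
    rw [pair_add_left', pair_symm' G x (fun u => x u + y u), pair_add_left',
      pair_symm' G y (fun u => x u + y u), pair_add_left', pair_symm' G y x]
    ring
  have hca : evalK (G.chAdd K x) y = evalK K y + 2 * G.pair x y := evalK_chAdd' G K x y
  rw [hca] at hy
  unfold WGraph.qdiff
  rw [evalK_add' K x y, hpair, hca]
  simp only [Int.ModEq] at hx hy
  omega

theorem chAdd_comm' (G : WGraph V) (K x y : V → ℤ) :
    G.chAdd (G.chAdd K x) y = G.chAdd (G.chAdd K y) x := by
  funext u
  unfold WGraph.chAdd
  ring

theorem qdiff_swap' {G : WGraph V} {K : V → ℤ} (hK : G.IsChar K) (x y : V → ℤ) :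
    G.qdiff K x + G.qdiff (G.chAdd K x) y = G.qdiff K y + G.qdiff (G.chAdd K y) x := by
  rw [qdiff_add' hK x y, qdiff_add' hK y x]
  have h : (fun u => x u + y u) = (fun u => y u + x u) := by funext u; ring
  rw [h]

theorem eVec_insert' {w : V} {T : Finset V} (hw : w ∉ T) :
    (fun u => eVec ({w} : Finset V) u + eVec T u) = eVec (insert w T) := by
  funext u
  unfold eVec
  by_cases h1 : u = w
  · subst h1; simp [hw]
  · simp [h1]

theorem qrel_le' {G : WGraph V} (K : V → ℤ) (S : Finset V) (c : ℤ)
    (h : ∀ T ∈ S.powerset, G.qdiff K (eVec T) ≤ c) : G.qrel K S ≤ c :=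
  Finset.sup'_le _ _ h

theorem qdiff_le_qrel' {G : WGraph V} (K : V → ℤ) (S : Finset V) {T : Finset V}
    (hT : T ∈ S.powerset) : G.qdiff K (eVec T) ≤ G.qrel K S := by
  unfold WGraph.qrel
  exact Finset.le_sup' (fun T => G.qdiff K (eVec T)) hT

theorem dExp₁_nonneg (G : WGraph V) (K : V → ℤ) (S : Finset V) (w : V) :
    0 ≤ dExp₁ G K S w := by
  have h := qrel_le' (G := G) K (S.erase w) (G.qrel K S) fun T hT =>
    qdiff_le_qrel' K S (Finset.mem_powerset.2
      ((Finset.mem_powerset.1 hT).trans (Finset.erase_subset w S)))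
  unfold dExp₁
  omega

theorem dExp₂_nonneg {G : WGraph V} {K : V → ℤ} (hK : G.IsChar K) {S : Finset V} {w : V}
    (hw : w ∈ S) : 0 ≤ dExp₂ G K S w := by
  unfold dExp₂
  have h2 : G.qrel (G.chAdd K (eVec {w})) (S.erase w)
      ≤ G.qrel K S - G.qdiff K (eVec {w}) := by
    refine qrel_le' _ _ _ fun T hT => ?_
    have hTsub : T ⊆ S.erase w := Finset.mem_powerset.1 hT
    have hwT : w ∉ T := fun hmem => (Finset.mem_erase.1 (hTsub hmem)).1 rfl
    have hq := qdiff_add' hK (eVec {w}) (eVec T)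
    rw [eVec_insert' hwT] at hq
    have hins : insert w T ∈ S.powerset :=
      Finset.mem_powerset.2
        (Finset.insert_subset hw (hTsub.trans (Finset.erase_subset w S)))
    have hle2 := qdiff_le_qrel' (G := G) K S hins
    omega
  omega

theorem sum_sum_erase_eq_zero {V : Type*} [DecidableEq V] {M : Type*} [AddCommMonoid M]
    (h2 : ∀ a : M, a + a = 0) (S : Finset V) (F : V → V → M)
    (hsymm : ∀ w ∈ S, ∀ x ∈ S, w ≠ x → F w x = F x w) :
    ∑ w ∈ S, ∑ x ∈ S.erase w, F w x = 0 := by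
  rw [Finset.sum_sigma' S (fun w => S.erase w) F]
  refine Finset.sum_involution (fun p _ => ⟨p.2, p.1⟩) ?_ ?_ ?_ ?_
  · intro p hp
    rw [Finset.mem_sigma] at hp
    obtain ⟨h1, h3⟩ := hp
    have hne := (Finset.mem_erase.1 h3).1
    have hx : p.2 ∈ S := Finset.mem_of_mem_erase h3
    rw [hsymm p.1 h1 p.2 hx (Ne.symm hne)]
    exact h2 _
  · intro p hp _
    rw [Finset.mem_sigma] at hp
    have hne := (Finset.mem_erase.1 hp.2).1
    intro h
    exact hne (congrArg Sigma.fst h)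
  · intro p hp
    rw [Finset.mem_sigma] at hp ⊢
    obtain ⟨h1, h3⟩ := hp
    obtain ⟨hne, hx⟩ := Finset.mem_erase.1 h3
    exact ⟨hx, Finset.mem_erase.2 ⟨Ne.symm hne, h1⟩⟩
  · intro p hp
    rfl

/-- The four terms contributed by the ordered pair `(w, x)` to `δ²φ(K, S)`. -/
def Fterm (G : WGraph V) (φ : Cplus G) (K : G.Ch) (S : Finset V) (w x : V) : Tplus :=
  Upow (dExp₁ G K.1 S w + dExp₁ G K.1 (S.erase w) x) (φ (K, (S.erase w).erase x))
  + Upow (dExp₁ G K.1 S w + dExp₂ G K.1 (S.erase w) x)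
      (φ (K.add (eVec {x}), (S.erase w).erase x))
  + Upow (dExp₂ G K.1 S w + dExp₁ G (K.add (eVec {w})).1 (S.erase w) x)
      (φ (K.add (eVec {w}), (S.erase w).erase x))
  + Upow (dExp₂ G K.1 S w + dExp₂ G (K.add (eVec {w})).1 (S.erase w) x)
      (φ ((K.add (eVec {w})).add (eVec {x}), (S.erase w).erase x))

theorem Fterm_expand (G : WGraph V) (δ : Cplus G → Cplus G) (hδ : IsDelta G δ)
    (φ : Cplus G) (K : G.Ch) (S : Finset V) (w : V) (hw : w ∈ S) :
    Upow (dExp₁ G K.1 S w) ((δ φ) (K, S.erase w))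
      + Upow (dExp₂ G K.1 S w) ((δ φ) (K.add (eVec {w}), S.erase w))
      = ∑ x ∈ S.erase w, Fterm G φ K S w x := by
  have h1 := dExp₁_nonneg G K.1 S w
  have h2 := dExp₂_nonneg K.2 hw
  rw [hδ φ K (S.erase w), hδ φ (K.add (eVec {w})) (S.erase w)]
  rw [Upow_sum, Upow_sum, ← Finset.sum_add_distrib]
  refine Finset.sum_congr rfl fun x _ => ?_
  unfold Fterm
  rw [Upow_add', Upow_add', Upow_comp _ _ h1, Upow_comp _ _ h1,
    Upow_comp _ _ h2, Upow_comp _ _ h2]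
  abel

theorem Fterm_symm (G : WGraph V) (φ : Cplus G) (K : G.Ch) (S : Finset V) {w x : V}
    (hw : w ∈ S) (hx : x ∈ S) (hne : w ≠ x) :
    Fterm G φ K S w x = Fterm G φ K S x w := by
  have hK : G.IsChar K.1 := K.2
  have herase : (S.erase w).erase x = (S.erase x).erase w := Finset.erase_right_comm
  have hcomm : (K.add (eVec {w})).add (eVec {x}) = (K.add (eVec {x})).add (eVec {w}) :=
    Subtype.ext (chAdd_comm' G K.1 (eVec {w}) (eVec {x}))
  have e11 : dExp₁ G K.1 S w + dExp₁ G K.1 (S.erase w) x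
      = dExp₁ G K.1 S x + dExp₁ G K.1 (S.erase x) w := by
    unfold dExp₁; rw [herase]; ring
  have e12 : dExp₁ G K.1 S w + dExp₂ G K.1 (S.erase w) x
      = dExp₂ G K.1 S x + dExp₁ G (K.add (eVec {x})).1 (S.erase x) w := by
    show dExp₁ G K.1 S w + dExp₂ G K.1 (S.erase w) x
      = dExp₂ G K.1 S x + dExp₁ G (G.chAdd K.1 (eVec {x})) (S.erase x) w
    unfold dExp₁ dExp₂; rw [herase]; ring
  have e21 : dExp₂ G K.1 S w + dExp₁ G (K.add (eVec {w})).1 (S.erase w) x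
      = dExp₁ G K.1 S x + dExp₂ G K.1 (S.erase x) w := by
    show dExp₂ G K.1 S w + dExp₁ G (G.chAdd K.1 (eVec {w})) (S.erase w) x
      = dExp₁ G K.1 S x + dExp₂ G K.1 (S.erase x) w
    unfold dExp₁ dExp₂; rw [herase]; ring
  have e22 : dExp₂ G K.1 S w + dExp₂ G (K.add (eVec {w})).1 (S.erase w) x
      = dExp₂ G K.1 S x + dExp₂ G (K.add (eVec {x})).1 (S.erase x) w := by
    show dExp₂ G K.1 S w + dExp₂ G (G.chAdd K.1 (eVec {w})) (S.erase w) x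
      = dExp₂ G K.1 S x + dExp₂ G (G.chAdd K.1 (eVec {x})) (S.erase x) w
    have hq := qdiff_swap' hK (eVec {w}) (eVec {x})
    unfold dExp₂
    rw [herase, chAdd_comm' G K.1 (eVec {w}) (eVec {x})]
    omega
  unfold Fterm
  rw [herase, hcomm, e11, e12, e21, e22]
  abel

end DeltaSqAux

/-- The operator `δ` on `C⁺(G)` defined by
`δ(φ)(K,S) = ∑_{w∈S} [U^{q(K,S)−q(K,S−w)}·φ(K,S−w) + U^{q(K,S)−q(K+2E_w,S−w)}·φ(K+2E_w,S−w)]`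
satisfies `δ² = 0`, so `(C⁺(G), δ)` is a chain complex of `𝔽[U]`-modules. -/
theorem delta_squared_eq_zero (G : WGraph V) (δ : Cplus G → Cplus G) (hδ : IsDelta G δ) :
    ∀ φ : Cplus G, δ (δ φ) = 0 := by
  intro φ
  ext p
  obtain ⟨K, S⟩ := p
  refine Eq.trans (hδ (δ φ) K S) ?_
  have h0 : ((0 : Cplus G) (K, S)) = 0 := rfl
  rw [h0]
  refine Eq.trans
    (Finset.sum_congr rfl fun w hw => Fterm_expand G δ hδ φ K S w hw) ?_
  exact sum_sum_erase_eq_zero tplus_add_self S _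
    (fun w hw x hx hne => Fterm_symm G φ K S hw hx hne)

end
end

section
/- If v ∉ S, then for every characteristic vector (K,t) of G and every i ∈ ℤ, q'((K,t+2i+1),S) − q'(K,t+2i+1) = q((K,t),S) − q(K,t), and consequently c(i,(K,t),S) = i(i+1)/2. -/
/-!
Common setup: the lattice cohomology complex of a weighted graph
(Némethi; J. Greene, "A surgery triangle for lattice cohomology").

A finite graph `G` with integer weights on vertices and signs on (multi-)edges is
encoded by its symmetric incidence data `M : V → V → ℤ`: for `u ≠ w` the entry
`M u w` is the signed number of edges joining `u` and `w`, and `M u u = m(u)` is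
the weight of `u`.  This is exactly the data of the intersection pairing `(·,·)`
on `L(G) = ℤ⟨E_u : u ∈ V⟩`, via `M u w = (E_u, E_w)`.
-/

noncomputable section

open Function

variable {V : Type*} [Fintype V] [DecidableEq V]

/-- If `v ∉ S`, then for every characteristic vector `(K,t)` of `G` and
every `i ∈ ℤ`, `q'((K,t+2i+1),S) − q'(K,t+2i+1) = q((K,t),S) − q(K,t)`, and consequently
`c(i,(K,t),S) = i(i+1)/2`. -/
theorem cExp_of_not_mem (G : WGraph V) (v : V) (S : Finset V) (hv : v ∉ S)
    (K : G.Ch) (i : ℤ) :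
    (G.bump v).qrel (K.bumpSh v i).1 S = G.qrel K.1 S ∧
      cExp G v i K S = i * (i + 1) / 2 := by
  have hq : (G.bump v).qrel (K.bumpSh v i).1 S = G.qrel K.1 S := by
    unfold WGraph.qrel
    refine Finset.sup'_congr _ rfl ?_
    intro T hT
    have hvT : v ∉ T := fun h => hv (Finset.mem_powerset.mp hT h)
    have hTv : eVec T v = 0 := by simp [eVec, hvT]
    unfold WGraph.qdiff
    rw [WGraph.pair_bump, hTv]
    have he : evalK (K.bumpSh v i).1 (eVec T) = evalK K.1 (eVec T) := by
      show evalK (Function.update K.1 v (K.1 v + (2 * i + 1))) (eVec T) = _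
      rw [WGraph.evalK_update, hTv]; ring
    rw [he]; ring_nf
  refine ⟨hq, ?_⟩
  unfold cExp
  rw [hq]
  ring_nf

end
end

section
/- If v ∈ S, then for every characteristic vector (K,t) of G and every i ∈ ℤ, q'((K,t+2i+1),S) − q'(K,t+2i+1) = max{ q((K,t),S−v), q((K,t)+2E_v,S−v) − i − 1 } − q(K,t). -/
/-!
Common setup: the lattice cohomology complex of a weighted graph
(Némethi; J. Greene, "A surgery triangle for lattice cohomology").

A finite graph `G` with integer weights on vertices and signs on (multi-)edges is
encoded by its symmetric incidence data `M : V → V → ℤ`: for `u ≠ w` the entry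
`M u w` is the signed number of edges joining `u` and `w`, and `M u u = m(u)` is
the weight of `u`.  This is exactly the data of the intersection pairing `(·,·)`
on `L(G) = ℤ⟨E_u : u ∈ V⟩`, via `M u w = (E_u, E_w)`.
-/

noncomputable section

open Function

variable {V : Type*} [Fintype V] [DecidableEq V]

namespace WGraph

theorem pair_eVec_single' (G : WGraph V) (x : V → ℤ) (u : V) :
    G.pair x (eVec {u}) = ∑ a, G.M a u * x a := by
  unfold pair eVec
  refine Finset.sum_congr rfl fun a _ => ?_
  simp [mul_ite, Finset.sum_ite_eq']

theorem sum_pair_single_mul' (G : WGraph V) (x y : V → ℤ) :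
    ∑ u, G.pair x (eVec {u}) * y u = G.pair x y := by
  simp only [pair_eVec_single', Finset.sum_mul]
  rw [Finset.sum_comm]
  exact Finset.sum_congr rfl fun a _ => Finset.sum_congr rfl fun u _ => by ring

theorem evalK_chAdd' (G : WGraph V) (K x y : V → ℤ) :
    evalK (G.chAdd K x) y = evalK K y + 2 * G.pair x y := by
  unfold evalK chAdd
  rw [← sum_pair_single_mul' G x y, Finset.mul_sum, ← Finset.sum_add_distrib]
  exact Finset.sum_congr rfl fun u _ => by ring

theorem pair_symm' (G : WGraph V) (x y : V → ℤ) : G.pair x y = G.pair y x := by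
  unfold pair; rw [Finset.sum_comm]
  refine Finset.sum_congr rfl fun a _ => Finset.sum_congr rfl fun b _ => ?_
  rw [G.symm]; ring

theorem evalK_add' (K x y : V → ℤ) : evalK K (x + y) = evalK K x + evalK K y := by
  unfold evalK
  rw [← Finset.sum_add_distrib]
  exact Finset.sum_congr rfl fun u _ => by simp; ring

theorem pair_add_add' (G : WGraph V) (x y : V → ℤ) :
    G.pair (x + y) (x + y) = G.pair x x + G.pair x y + G.pair y x + G.pair y y := by
  unfold pair
  simp only [← Finset.sum_add_distrib]
  exact Finset.sum_congr rfl fun a _ => Finset.sum_congr rfl fun b _ => by simp; ring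

theorem eVec_insert' (v : V) (T : Finset V) (hv : v ∉ T) :
    eVec (insert v T) = eVec {v} + eVec T := by
  funext u
  rcases eq_or_ne u v with h | h
  · subst h; simp [eVec, hv]
  · simp [eVec, h]

theorem char_even' {G : WGraph V} {K : V → ℤ} (hK : G.IsChar K) (x : V → ℤ) :
    (2 : ℤ) ∣ evalK K x + G.pair x x := by
  have h := hK x
  rw [Int.ModEq] at h
  omega

theorem qdiff_insert' (G : WGraph V) {K : V → ℤ} (hK : G.IsChar K) (v : V)
    (T : Finset V) (hv : v ∉ T) :
    G.qdiff K (eVec (insert v T))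
      = G.qdiff K (eVec {v}) + G.qdiff (G.chAdd K (eVec {v})) (eVec T) := by
  have hb := char_even' hK (eVec {v})
  have hc := char_even' (hK.chAdd (eVec {v})) (eVec T)
  rw [evalK_chAdd'] at hc
  have ha : evalK K (eVec (insert v T)) + G.pair (eVec (insert v T)) (eVec (insert v T))
      = (evalK K (eVec {v}) + G.pair (eVec {v}) (eVec {v}))
        + ((evalK K (eVec T) + 2 * G.pair (eVec {v}) (eVec T))
            + G.pair (eVec T) (eVec T)) := by
    rw [eVec_insert' v T hv, evalK_add', pair_add_add',
      pair_symm' G (eVec T) (eVec {v})]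
    ring
  unfold qdiff
  rw [evalK_chAdd']
  omega

theorem qdiff_bump' (G : WGraph V) (v : V) (K : V → ℤ) (i : ℤ) (T : Finset V) :
    (G.bump v).qdiff (Function.update K v (K v + (2 * i + 1))) (eVec T)
      = if v ∈ T then G.qdiff K (eVec T) - i - 1 else G.qdiff K (eVec T) := by
  unfold qdiff
  rw [evalK_update, pair_bump]
  by_cases h : v ∈ T
  · have hev : eVec T v = 1 := by simp [eVec, h]
    rw [hev, if_pos h]
    have he : -(evalK K (eVec T) + (2 * i + 1) * 1
        + (G.pair (eVec T) (eVec T) + 1 * 1))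
        = -(evalK K (eVec T) + G.pair (eVec T) (eVec T)) + (-(i + 1)) * 2 := by ring
    rw [he, Int.add_mul_ediv_right _ _ (by norm_num : (2:ℤ) ≠ 0)]
    ring
  · have hev : eVec T v = 0 := by simp [eVec, h]
    rw [hev, if_neg h]
    ring_nf

end WGraph

/-- If `v ∈ S`, then for every characteristic vector `(K,t)` of `G` and
every `i ∈ ℤ`,
`q'((K,t+2i+1),S) − q'(K,t+2i+1) = max{ q((K,t),S−v), q((K,t)+2E_v,S−v) − i − 1 } − q(K,t)`. -/
theorem qrel_bump_of_mem (G : WGraph V) (v : V) (S : Finset V) (hv : v ∈ S)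
    (K : G.Ch) (i : ℤ) :
    (G.bump v).qrel (K.bumpSh v i).1 S
      = max (G.qrel K.1 (S.erase v))
          (G.qdiff K.1 (eVec {v}) + G.qrel (G.chAdd K.1 (eVec {v})) (S.erase v) - i - 1) := by
  have hne : (S.erase v).powerset.Nonempty := Finset.powerset_nonempty _
  apply le_antisymm
  · apply Finset.sup'_le
    intro T hT
    rw [Finset.mem_powerset] at hT
    show (G.bump v).qdiff (WGraph.Ch.bumpSh K v i).1 (eVec T) ≤ _
    have hb : (WGraph.Ch.bumpSh K v i).1
        = Function.update K.1 v (K.1 v + (2 * i + 1)) := rfl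
    rw [hb, WGraph.qdiff_bump']
    by_cases h : v ∈ T
    · rw [if_pos h]
      have hT' : T.erase v ⊆ S.erase v := Finset.erase_subset_erase v hT
      have hins : T = insert v (T.erase v) := (Finset.insert_erase h).symm
      rw [hins, WGraph.qdiff_insert' G K.2 v (T.erase v) (Finset.notMem_erase v T)]
      have hle : G.qdiff (G.chAdd K.1 (eVec {v})) (eVec (T.erase v))
          ≤ G.qrel (G.chAdd K.1 (eVec {v})) (S.erase v) := by
        unfold WGraph.qrel
        exact Finset.le_sup' (fun T => G.qdiff (G.chAdd K.1 (eVec {v})) (eVec T))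
          (Finset.mem_powerset.mpr hT')
      refine le_trans ?_ (le_max_right _ _)
      omega
    · rw [if_neg h]
      refine le_trans ?_ (le_max_left _ _)
      unfold WGraph.qrel
      exact Finset.le_sup' (fun T => G.qdiff K.1 (eVec T)) (Finset.mem_powerset.mpr
        (Finset.subset_erase.mpr ⟨hT, h⟩))
  · apply max_le
    · apply Finset.sup'_le
      intro T hT
      rw [Finset.mem_powerset] at hT
      have hvT : v ∉ T := fun h => (Finset.notMem_erase v S) (hT h)
      have hTS : T ⊆ S := hT.trans (Finset.erase_subset v S)
      have key : G.qdiff K.1 (eVec T)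
          = (G.bump v).qdiff (WGraph.Ch.bumpSh K v i).1 (eVec T) := by
        have hb : (WGraph.Ch.bumpSh K v i).1
            = Function.update K.1 v (K.1 v + (2 * i + 1)) := rfl
        rw [hb, WGraph.qdiff_bump', if_neg hvT]
      rw [key]
      unfold WGraph.qrel
      exact Finset.le_sup' (fun T => (G.bump v).qdiff (K.bumpSh v i).1 (eVec T))
        (Finset.mem_powerset.mpr hTS)
    · obtain ⟨T, hT, hEq⟩ := Finset.exists_mem_eq_sup' hne
        (fun T => G.qdiff (G.chAdd K.1 (eVec {v})) (eVec T))
      rw [Finset.mem_powerset] at hT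
      have hvT : v ∉ T := fun h => (Finset.notMem_erase v S) (hT h)
      have key : G.qdiff K.1 (eVec {v}) + G.qrel (G.chAdd K.1 (eVec {v})) (S.erase v)
            - i - 1
          = (G.bump v).qdiff (WGraph.Ch.bumpSh K v i).1 (eVec (insert v T)) := by
        have hb : (WGraph.Ch.bumpSh K v i).1
            = Function.update K.1 v (K.1 v + (2 * i + 1)) := rfl
        rw [hb, WGraph.qdiff_bump', if_pos (Finset.mem_insert_self v T),
          WGraph.qdiff_insert' G K.2 v T hvT]
        show _ + G.qrel _ _ - i - 1 = _
        unfold WGraph.qrel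
        rw [← hEq]
      rw [key]
      unfold WGraph.qrel
      exact Finset.le_sup' (fun T => (G.bump v).qdiff (K.bumpSh v i).1 (eVec T))
        (Finset.mem_powerset.mpr
          (Finset.insert_subset hv (hT.trans (Finset.erase_subset v S))))

end
end

section
/- For every characteristic vector (K,t) of G, every i ∈ ℤ, and every S ⊆ V, the exponent c(i,(K,t),S) is a nonnegative integer. -/
/-!
Common setup: the lattice cohomology complex of a weighted graph
(Némethi; J. Greene, "A surgery triangle for lattice cohomology").

A finite graph `G` with integer weights on vertices and signs on (multi-)edges is
encoded by its symmetric incidence data `M : V → V → ℤ`: for `u ≠ w` the entry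
`M u w` is the signed number of edges joining `u` and `w`, and `M u u = m(u)` is
the weight of `u`.  This is exactly the data of the intersection pairing `(·,·)`
on `L(G) = ℤ⟨E_u : u ∈ V⟩`, via `M u w = (E_u, E_w)`.
-/

noncomputable section

open Function

variable {V : Type*} [Fintype V] [DecidableEq V]

/-- For every characteristic vector `(K,t)` of `G`, every `i ∈ ℤ`, and
every `S ⊆ V`, the exponent `c(i,(K,t),S)` is a nonnegative integer. -/
theorem cExp_nonneg (G : WGraph V) (v : V) (K : G.Ch) (i : ℤ) (S : Finset V) :
    0 ≤ cExp G v i K S := by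
  unfold cExp
  obtain ⟨k, hk⟩ := Int.even_mul_succ_self i
  have hdiv : i * (i + 1) / 2 = k := by omega
  have hknn : 0 ≤ k := by nlinarith [sq_nonneg (2 * i + 1)]
  have hki : 0 ≤ k + i + 1 := by nlinarith [sq_nonneg (2 * i + 3)]
  have hb : ∀ T : Finset V,
      (G.bump v).qdiff (K.bumpSh v i).1 (eVec T)
        = G.qdiff K.1 (eVec T) + (-((i + 1) * (if v ∈ T then 1 else 0))) := by
    intro T
    unfold WGraph.qdiff
    have h1 : evalK (K.bumpSh v i).1 (eVec T)
        = evalK K.1 (eVec T) + (2 * i + 1) * eVec T v := WGraph.evalK_update _ _ _ _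
    have h2 := G.pair_bump v (eVec T)
    rw [h1, h2]
    have hv : eVec T v = if v ∈ T then 1 else 0 := rfl
    have hsq : eVec T v * eVec T v = eVec T v := by
      rw [hv]; split <;> ring
    rw [hsq]
    have hr : -(evalK K.1 (eVec T) + (2 * i + 1) * eVec T v
          + (G.pair (eVec T) (eVec T) + eVec T v))
        = -(evalK K.1 (eVec T) + G.pair (eVec T) (eVec T))
          + (-((i + 1) * eVec T v)) * 2 := by ring
    rw [hr, Int.add_mul_ediv_right _ _ (by norm_num : (2 : ℤ) ≠ 0), hv]
  have hle : (G.bump v).qrel (K.bumpSh v i).1 S ≤ G.qrel K.1 S + i * (i + 1) / 2 := by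
    unfold WGraph.qrel
    apply Finset.sup'_le
    intro T hT
    rw [hb T]
    have hq : G.qdiff K.1 (eVec T)
        ≤ S.powerset.sup' (Finset.powerset_nonempty S) (fun T => G.qdiff K.1 (eVec T)) :=
      Finset.le_sup' (fun T => G.qdiff K.1 (eVec T)) hT
    have hcase : -((i + 1) * (if v ∈ T then 1 else 0)) ≤ i * (i + 1) / 2 := by
      split <;> simp <;> omega
    linarith
  linarith

end
end
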